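/- The specific Roesser realization with A₁₁ the block lower-shift on c_out-blocks of length r₁, A₂₂ the block upper-shift on c_in-blocks of length r₂, A₂₁ = 0, and A₁₂, B₁, C₂, D filled with kernel blocks K[t₁,t₂], has transfer function ∑_{j₁=0}^{r₁}∑_{j₂=0}^{r₂} K[j₁,j₂] z₁^{−j₁} z₂^{−j₂}. -/

import Mathlib

open Matrix Finset

noncomputable def Pinv (r c : ℕ) (z : ℝ) : Matrix (Fin r × Fin c) (Fin r × Fin c) ℝ :=
  fun p q => if (q.1 : ℕ) ≤ p.1 ∧ p.2 = q.2 then z⁻¹ ^ ((p.1 : ℕ) - q.1 + 1) else 0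

lemma Pmul (r c : ℕ) (z : ℝ) (hz : z ≠ 0)
    (A : Matrix (Fin r × Fin c) (Fin r × Fin c) ℝ)
    (hA : ∀ p q, A p q = if (p.1 : ℕ) = (q.1 : ℕ) + 1 ∧ p.2 = q.2 then 1 else 0) :
    (z • 1 - A) * Pinv r c z = 1 := by
  ext p q
  rw [Matrix.mul_apply]
  simp only [Matrix.sub_apply, Matrix.smul_apply, Matrix.one_apply, smul_eq_mul, hA,
    sub_mul, Finset.sum_sub_distrib, mul_ite, mul_one, mul_zero, ite_mul, zero_mul, one_mul,
    Finset.sum_ite_eq, Finset.mem_univ, if_true]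
  have h2 : (∑ j : Fin r × Fin c, if (p.1:ℕ) = (j.1:ℕ) + 1 ∧ p.2 = j.2
      then Pinv r c z j q else 0)
      = if h : 0 < (p.1:ℕ) then Pinv r c z (⟨(p.1:ℕ)-1, by omega⟩, p.2) q else 0 := by
    split
    · next h =>
      rw [Finset.sum_eq_single (⟨(⟨(p.1:ℕ)-1, by omega⟩ : Fin r), p.2⟩ : Fin r × Fin c)]
      · rw [if_pos ⟨by simp; omega, rfl⟩]
      · intro j _ hj
        rw [if_neg]
        rintro ⟨h1, h2⟩
        exact hj (Prod.ext (Fin.ext (by simp only []; omega)) h2.symm)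
      · simp
    · next h =>
      apply Finset.sum_eq_zero
      intro j _
      rw [if_neg]; rintro ⟨h1, -⟩; omega
  rw [h2]
  simp only [Pinv]
  rcases eq_or_ne p.2 q.2 with hpq2 | hpq2
  · rcases lt_trichotomy (p.1:ℕ) (q.1:ℕ) with hlt | heq | hgt
    · have hne : p ≠ q := by rintro rfl; omega
      rw [if_neg (by rintro ⟨h, -⟩; omega), if_neg hne]
      split
      · rw [if_neg (by rintro ⟨h, -⟩; omega)]; ring
      · ring
    · have hpq : p = q := Prod.ext (Fin.ext heq) hpq2
      subst hpq
      rw [if_pos rfl, if_pos ⟨le_refl _, rfl⟩]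
      simp only [Nat.sub_self, pow_one, zero_add]
      split
      · rw [if_neg (by rintro ⟨h, -⟩; omega)]
        field_simp
        norm_num
      · field_simp
        norm_num
    · have hne : p ≠ q := by rintro rfl; omega
      rw [if_neg hne, if_pos ⟨by omega, hpq2⟩, dif_pos (by omega), if_pos ⟨by omega, hpq2⟩]
      have e1 : (p.1:ℕ) - 1 - q.1 + 1 = (p.1:ℕ) - q.1 := by omega
      rw [e1]
      have e2 : (p.1:ℕ) - q.1 = ((p.1:ℕ) - q.1 - 1) + 1 := by omega
      rw [e2, pow_succ]
      field_simp
      ring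
  · have hne : p ≠ q := by rintro rfl; exact hpq2 rfl
    rw [if_neg hne, if_neg (by tauto)]
    split
    · rw [if_neg (by tauto)]; ring
    · ring

lemma Smul (r c : ℕ) (z : ℝ) (hz : z ≠ 0)
    (A : Matrix (Fin r × Fin c) (Fin r × Fin c) ℝ)
    (hA : ∀ p q, A p q = if (q.1 : ℕ) = (p.1 : ℕ) + 1 ∧ p.2 = q.2 then 1 else 0) :
    (z • 1 - A) * (Pinv r c z)ᵀ = 1 := by
  have h := Pmul r c z hz Aᵀ (by
    intro p q
    rw [Matrix.transpose_apply, hA]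
    exact if_congr (and_congr Iff.rfl eq_comm) rfl rfl)
  have h' := mul_eq_one_comm.mp h
  have := congrArg Matrix.transpose h'
  rw [Matrix.transpose_mul, Matrix.transpose_one] at this
  simpa [Matrix.transpose_sub, Matrix.transpose_smul, Matrix.transpose_one] using this

lemma sum_rev {M : Type*} [AddCommMonoid M] (r : ℕ) (g : ℕ → M) :
    ∑ ℓ ∈ Finset.range r, g (r - ℓ) = ∑ j ∈ Finset.range r, g (j + 1) := by
  rw [← Finset.sum_range_reflect (fun j => g (j + 1)) r]
  apply Finset.sum_congr rfl
  intro ℓ hℓ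
  rw [Finset.mem_range] at hℓ
  congr 1
  omega

/-- The Theorem 1 Roesser realization has transfer function
∑_{j₁,j₂} K[j₁,j₂] z₁^{−j₁} z₂^{−j₂}. -/
theorem stmt10 (r₁ r₂ cin cout : ℕ) (hr₁ : 0 < r₁) (hr₂ : 0 < r₂)
    (K : ℕ → ℕ → Matrix (Fin cout) (Fin cin) ℝ)
    (A₁₁ : Matrix (Fin r₁ × Fin cout) (Fin r₁ × Fin cout) ℝ)
    (A₁₂ : Matrix (Fin r₁ × Fin cout) (Fin r₂ × Fin cin) ℝ)
    (A₂₂ : Matrix (Fin r₂ × Fin cin) (Fin r₂ × Fin cin) ℝ)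
    (B₁ : Matrix (Fin r₁ × Fin cout) (Fin cin) ℝ)
    (B₂ : Matrix (Fin r₂ × Fin cin) (Fin cin) ℝ)
    (C₁ : Matrix (Fin cout) (Fin r₁ × Fin cout) ℝ)
    (C₂ : Matrix (Fin cout) (Fin r₂ × Fin cin) ℝ)
    (hA₁₁ : ∀ p q, A₁₁ p q = if (p.1 : ℕ) = (q.1 : ℕ) + 1 ∧ p.2 = q.2 then 1 else 0)
    (hA₁₂ : ∀ p q, A₁₂ p q = K (r₁ - (p.1 : ℕ)) (r₂ - (q.1 : ℕ)) p.2 q.2)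
    (hA₂₂ : ∀ p q, A₂₂ p q = if (q.1 : ℕ) = (p.1 : ℕ) + 1 ∧ p.2 = q.2 then 1 else 0)
    (hB₁ : ∀ p b, B₁ p b = K (r₁ - (p.1 : ℕ)) 0 p.2 b)
    (hB₂ : ∀ p b, B₂ p b = if (p.1 : ℕ) = r₂ - 1 ∧ p.2 = b then 1 else 0)
    (hC₁ : ∀ o p, C₁ o p = if (p.1 : ℕ) = r₁ - 1 ∧ o = p.2 then 1 else 0)
    (hC₂ : ∀ o p, C₂ o p = K 0 (r₂ - (p.1 : ℕ)) o p.2)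
    (z₁ z₂ : ℝ) (hz₁ : z₁ ≠ 0) (hz₂ : z₂ ≠ 0) :
    fromCols C₁ C₂ *
        (fromBlocks (z₁ • 1 - A₁₁) (-A₁₂) 0 (z₂ • 1 - A₂₂))⁻¹ *
        fromRows B₁ B₂ + K 0 0 =
      ∑ j₁ ∈ Finset.range (r₁ + 1), ∑ j₂ ∈ Finset.range (r₂ + 1),
        (z₁⁻¹ ^ j₁ * z₂⁻¹ ^ j₂) • K j₁ j₂ := by
  set Q := Pinv r₁ cout z₁ with hQdef
  set Si := (Pinv r₂ cin z₂)ᵀ with hSidef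
  have hP : (z₁ • 1 - A₁₁) * Q = 1 := Pmul _ _ _ hz₁ _ hA₁₁
  have hS : (z₂ • 1 - A₂₂) * Si = 1 := Smul _ _ _ hz₂ _ hA₂₂
  have hX : fromBlocks (z₁ • 1 - A₁₁) (-A₁₂) 0 (z₂ • 1 - A₂₂) *
      fromBlocks Q (Q * A₁₂ * Si) 0 Si = 1 := by
    rw [Matrix.fromBlocks_multiply]
    have htr : (z₁ • 1 - A₁₁) * (Q * A₁₂ * Si) + (-A₁₂) * Si = 0 := by
      rw [← Matrix.mul_assoc, ← Matrix.mul_assoc, hP, Matrix.one_mul, Matrix.neg_mul]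
      exact add_neg_cancel _
    rw [htr, hP, hS]
    simp [Matrix.fromBlocks_one]
  rw [Matrix.inv_eq_right_inv hX, fromCols_mul_fromBlocks, fromCols_mul_fromRows]
  set E₁ : Matrix (Fin cout) (Fin r₁ × Fin cout) ℝ :=
    fun o p => if o = p.2 then z₁⁻¹ ^ (r₁ - (p.1 : ℕ)) else 0 with hE₁def
  set F₂ : Matrix (Fin r₂ × Fin cin) (Fin cin) ℝ :=
    fun p b => if p.2 = b then z₂⁻¹ ^ (r₂ - (p.1 : ℕ)) else 0 with hF₂def
  have hE : C₁ * Q = E₁ := by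
    ext o p
    rw [Matrix.mul_apply]
    rw [Finset.sum_eq_single (⟨(⟨r₁ - 1, by omega⟩ : Fin r₁), o⟩ : Fin r₁ × Fin cout)]
    · rw [hC₁]
      rw [if_pos ⟨rfl, rfl⟩, one_mul, hQdef]
      simp only [Pinv, hE₁def]
      rcases eq_or_ne o p.2 with h | h
      · rw [if_pos ⟨by omega, h⟩, if_pos h]
        congr 1
        omega
      · rw [if_neg (by rintro ⟨-, hh⟩; exact h hh), if_neg h]
    · intro j _ hj
      rw [hC₁, if_neg, zero_mul]
      rintro ⟨h1, h2⟩
      exact hj (Prod.ext (Fin.ext (by simpa using h1)) h2.symm)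
    · simp
  have hF : Si * B₂ = F₂ := by
    ext p b
    rw [Matrix.mul_apply]
    rw [Finset.sum_eq_single (⟨(⟨r₂ - 1, by omega⟩ : Fin r₂), b⟩ : Fin r₂ × Fin cin)]
    · rw [hB₂]
      rw [if_pos ⟨rfl, rfl⟩, mul_one, hSidef, Matrix.transpose_apply]
      simp only [Pinv, hF₂def]
      rcases eq_or_ne p.2 b with h | h
      · rw [if_pos ⟨by omega, h.symm⟩, if_pos h]
        congr 1
        omega
      · rw [if_neg (by rintro ⟨-, hh⟩; exact h hh.symm), if_neg h]
    · intro j _ hj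
      rw [hB₂, if_neg, mul_zero]
      rintro ⟨h1, h2⟩
      exact hj (Prod.ext (Fin.ext (by simpa using h1)) h2)
    · simp
  rw [Matrix.mul_zero, add_zero, hE, Matrix.add_mul]
  have e3 : C₁ * (Q * A₁₂ * Si) * B₂ = E₁ * (A₁₂ * F₂) := by
    rw [← hE, ← hF]
    simp only [Matrix.mul_assoc]
  have e2 : C₂ * Si * B₂ = C₂ * F₂ := by rw [Matrix.mul_assoc, hF]
  rw [e3, e2]
  have h1 : E₁ * B₁ = ∑ ℓ ∈ Finset.range r₁, z₁⁻¹ ^ (r₁ - ℓ) • K (r₁ - ℓ) 0 := by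
    ext o b
    rw [Matrix.mul_apply, Fintype.sum_prod_type]
    simp only [hE₁def, hB₁, ite_mul, zero_mul, Finset.sum_ite_eq, Finset.mem_univ, if_true]
    rw [Fin.sum_univ_eq_sum_range (fun x => z₁⁻¹ ^ (r₁ - x) * K (r₁ - x) 0 o b)]
    simp only [Matrix.sum_apply, Matrix.smul_apply, smul_eq_mul]
  have h2 : C₂ * F₂ = ∑ ℓ ∈ Finset.range r₂, z₂⁻¹ ^ (r₂ - ℓ) • K 0 (r₂ - ℓ) := by
    ext o b
    rw [Matrix.mul_apply, Fintype.sum_prod_type]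
    simp only [hC₂, hF₂def, mul_ite, mul_zero, Finset.sum_ite_eq', Finset.mem_univ, if_true]
    rw [Fin.sum_univ_eq_sum_range (fun x => K 0 (r₂ - x) o b * z₂⁻¹ ^ (r₂ - x))]
    simp only [Matrix.sum_apply, Matrix.smul_apply, smul_eq_mul]
    exact Finset.sum_congr rfl (fun x _ => by ring)
  have h3 : E₁ * (A₁₂ * F₂) = ∑ k ∈ Finset.range r₁, ∑ ℓ ∈ Finset.range r₂,
      (z₁⁻¹ ^ (r₁ - k) * z₂⁻¹ ^ (r₂ - ℓ)) • K (r₁ - k) (r₂ - ℓ) := by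
    ext o b
    rw [Matrix.mul_apply, Fintype.sum_prod_type]
    simp only [Matrix.mul_apply, Fintype.sum_prod_type]
    simp only [Matrix.mul_apply, Fintype.sum_prod_type, hE₁def, hA₁₂, hF₂def,
      ite_mul, zero_mul, mul_ite, mul_zero, Finset.sum_ite_eq, Finset.sum_ite_eq',
      Finset.mem_univ, if_true]
    rw [Fin.sum_univ_eq_sum_range (fun x => z₁⁻¹ ^ (r₁ - x) *
      ∑ u : Fin r₂, K (r₁ - x) (r₂ - u) o b * z₂⁻¹ ^ (r₂ - u))]
    simp only [Matrix.sum_apply, Matrix.smul_apply, smul_eq_mul]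
    refine Finset.sum_congr rfl (fun x hx => ?_)
    rw [Finset.mul_sum, Fin.sum_univ_eq_sum_range
      (fun u => z₁⁻¹ ^ (r₁ - x) * (K (r₁ - x) (r₂ - u) o b * z₂⁻¹ ^ (r₂ - u)))]
    exact Finset.sum_congr rfl (fun u _ => by ring)
  rw [h1, h2, h3]
  rw [sum_rev r₁ (fun j => z₁⁻¹ ^ j • K j 0),
    sum_rev r₂ (fun j => z₂⁻¹ ^ j • K 0 j),
    sum_rev r₁ (fun j => ∑ ℓ ∈ Finset.range r₂, (z₁⁻¹ ^ j * z₂⁻¹ ^ (r₂ - ℓ)) • K j (r₂ - ℓ))]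
  have h4 : ∀ j : ℕ, ∑ ℓ ∈ Finset.range r₂, (z₁⁻¹ ^ j * z₂⁻¹ ^ (r₂ - ℓ)) • K j (r₂ - ℓ)
      = ∑ ℓ ∈ Finset.range r₂, (z₁⁻¹ ^ j * z₂⁻¹ ^ (ℓ + 1)) • K j (ℓ + 1) :=
    fun j => sum_rev r₂ (fun l => (z₁⁻¹ ^ j * z₂⁻¹ ^ l) • K j l)
  simp only [h4]
  rw [Finset.sum_range_succ']
  simp only [Finset.sum_range_succ', pow_zero, mul_one, one_mul, one_smul]
  rw [Finset.sum_add_distrib]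
  abel
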